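/- Let θ₀ > 0 and let f : ℝ³ → ℝ be a nonnegative integrable function with f(v) ≤ 1/θ₀ for all v, ∫ f dv = ρ > 0, ∫ v f(v) dv = 0, and ∫ |v|² f(v) dv = 2ρe₀ with e₀ > 0. Then θ₀ ρ (3/(4π e₀))^{3/2} ≤ (5/3)√(10/π). -/

import Mathlib

open Real MeasureTheory Finset
open Metric

noncomputable abbrev E3 := EuclideanSpace ℝ (Fin 3)

lemma gamma52 : Real.Gamma (3/2 + 1) = 3/4 * Real.sqrt π := by
  rw [Real.Gamma_add_one (by norm_num), show (3/2:ℝ) = 1/2 + 1 by norm_num,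
    Real.Gamma_add_one (by norm_num), Real.Gamma_one_half_eq]
  ring

lemma sqrtpi_cube : Real.sqrt π ^ 3 / Real.Gamma (((3:ℕ):ℝ)/2 + 1) = 4*π/3 := by
  have h0 : Real.sqrt π ≠ 0 := by positivity
  rw [show ((3:ℕ):ℝ)/2 + 1 = 3/2 + 1 by norm_num, gamma52,
    show Real.sqrt π ^ 3 = π * Real.sqrt π by rw [pow_succ, Real.sq_sqrt pi_pos.le]]
  field_simp

lemma vol_cball (R : ℝ) (hR : 0 ≤ R) :
    volume (closedBall (0 : E3) R) = ENNReal.ofReal (4*π/3 * R^3) := by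
  rw [EuclideanSpace.volume_closedBall]
  simp only [Fintype.card_fin]
  rw [sqrtpi_cube, ← ENNReal.ofReal_pow hR, ← ENNReal.ofReal_mul (by positivity)]
  ring_nf

lemma vol_ball1 : volume (ball (0 : E3) 1) = ENNReal.ofReal (4*π/3) := by
  rw [EuclideanSpace.volume_ball]
  simp only [Fintype.card_fin]
  rw [sqrtpi_cube, ENNReal.ofReal_one, one_pow, one_mul]

lemma radial (R θ₀ : ℝ) (hR : 0 ≤ R) (hθ : 0 < θ₀) :
    ∫ x : E3, ‖x‖^2 * (closedBall (0:E3) R).indicator (fun _ => 1/θ₀) x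
      = 4*π/5 * R^5 / θ₀ := by
  have h1 : ∀ x : E3, ‖x‖^2 * (closedBall (0:E3) R).indicator (fun _ => 1/θ₀) x
      = (fun y : ℝ => if y ≤ R then y^2/θ₀ else 0) ‖x‖ := by
    intro x
    simp only [Set.indicator_apply, mem_closedBall, dist_zero_right]
    split <;> simp_all <;> ring
  simp_rw [h1]
  rw [MeasureTheory.integral_fun_norm_addHaar volume (fun y : ℝ => if y ≤ R then y^2/θ₀ else 0)]
  rw [finrank_euclideanSpace_fin, measureReal_def, vol_ball1, ENNReal.toReal_ofReal (by positivity)]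
  have h2 : ∀ y : ℝ, y ^ (3-1) • (if y ≤ R then y^2/θ₀ else 0)
      = Set.indicator (Set.Iic R) (fun y => y^4/θ₀) y := by
    intro y
    simp only [Set.indicator_apply, Set.mem_Iic, smul_eq_mul]
    split <;> ring
  simp_rw [h2]
  rw [MeasureTheory.setIntegral_indicator measurableSet_Iic, Set.Ioi_inter_Iic,
    ← intervalIntegral.integral_of_le hR, intervalIntegral.integral_div, integral_pow]
  simp only [smul_eq_mul, nsmul_eq_mul]
  ring

lemma norm_sq_E3 (x : E3) : ‖x‖^2 = ∑ d, (x d)^2 := by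
  rw [EuclideanSpace.norm_eq, Real.sq_sqrt (by positivity)]
  simp [Real.norm_eq_abs, sq_abs]

set_option maxHeartbeats 1000000 in
theorem fermi_pauli_bound (θ₀ ρ e₀ : ℝ) (hθ : 0 < θ₀) (hρ : 0 < ρ) (he : 0 < e₀)
    (f : (Fin 3 → ℝ) → ℝ) (hf_nonneg : ∀ v, 0 ≤ f v) (hf_int : Integrable f)
    (hf_bound : ∀ v, f v ≤ 1 / θ₀)
    (hmass : ∫ v, f v = ρ)
    (hmom : ∀ d : Fin 3, ∫ v : Fin 3 → ℝ, v d * f v = 0)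
    (henergy : ∫ v : Fin 3 → ℝ, (∑ d, (v d) ^ 2) * f v = 2 * ρ * e₀) :
    θ₀ * ρ * (3 / (4 * π * e₀)) ^ ((3 : ℝ) / 2) ≤ (5 / 3) * Real.sqrt (10 / π) := by
  have hπ := Real.pi_pos
  -- transfer to Euclidean space
  set e := (MeasurableEquiv.toLp 2 (Fin 3 → ℝ)).symm
  have mp := EuclideanSpace.volume_preserving_symm_measurableEquiv_toLp (Fin 3)
  set g : E3 → ℝ := fun x => f (e x) with hg_def
  have hg_int : Integrable g := (mp.integrable_comp_emb e.measurableEmbedding).2 hf_int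
  have hg_mass : ∫ x : E3, g x = ρ := by
    rw [hg_def, mp.integral_comp e.measurableEmbedding f, hmass]
  have hEfun : ∀ x : E3, ‖x‖^2 * g x = (fun v : Fin 3 → ℝ => (∑ d, (v d)^2) * f v) (e x) := by
    intro x
    simp only [hg_def]
    rw [norm_sq_E3]
    rfl
  have hE_int_pi : Integrable (fun v : Fin 3 → ℝ => (∑ d, (v d)^2) * f v) := by
    by_contra h
    rw [integral_undef h] at henergy
    nlinarith
  have hE_int : Integrable (fun x : E3 => ‖x‖^2 * g x) := by
    have := (mp.integrable_comp_emb e.measurableEmbedding).2 hE_int_pi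
    refine this.congr ?_
    filter_upwards with x using (hEfun x).symm
  have hE_val : ∫ x : E3, ‖x‖^2 * g x = 2 * ρ * e₀ := by
    calc ∫ x : E3, ‖x‖^2 * g x
        = ∫ x : E3, (fun v : Fin 3 → ℝ => (∑ d, (v d)^2) * f v) (e x) := by
          exact integral_congr_ae (Filter.Eventually.of_forall hEfun)
      _ = 2 * ρ * e₀ := by
          exact (mp.integral_comp e.measurableEmbedding _).trans henergy
  -- the Fermi ball
  set R : ℝ := (3 * ρ * θ₀ / (4 * π)) ^ ((1:ℝ)/3) with hRdef
  have hbase : 0 < 3 * ρ * θ₀ / (4 * π) := by positivity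
  have hR : 0 < R := Real.rpow_pos_of_pos hbase _
  have hR3 : R ^ 3 = 3 * ρ * θ₀ / (4 * π) := by
    rw [hRdef, ← Real.rpow_natCast (_ ^ ((1:ℝ)/3)) 3, ← Real.rpow_mul hbase.le]
    norm_num
  set S := closedBall (0 : E3) R with hSdef
  set f₀ : E3 → ℝ := S.indicator (fun _ => 1/θ₀) with hf₀def
  have hSmeas : MeasurableSet S := measurableSet_closedBall
  have hf₀_int : Integrable f₀ := by
    rw [hf₀def, integrable_indicator_iff hSmeas]
    exact (integrableOn_const_iff).2 (Or.inr ((vol_cball R hR.le) ▸ ENNReal.ofReal_lt_top))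
  have hf₀_mass : ∫ x : E3, f₀ x = ρ := by
    rw [hf₀def, integral_indicator hSmeas, setIntegral_const, measureReal_def, vol_cball R hR.le,
      ENNReal.toReal_ofReal (by positivity), smul_eq_mul, hR3]
    field_simp
  have hI₂ : ∫ x : E3, ‖x‖^2 * f₀ x = 4*π/5 * R^5 / θ₀ := radial R θ₀ hR.le hθ
  have hI₂_int : Integrable (fun x : E3 => ‖x‖^2 * f₀ x) := by
    have : (fun x : E3 => ‖x‖^2 * f₀ x) = S.indicator (fun x => ‖x‖^2 / θ₀) := by
      funext x
      by_cases hx : x ∈ S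
      · rw [hf₀def, Set.indicator_of_mem hx, Set.indicator_of_mem hx]; ring
      · rw [hf₀def, Set.indicator_of_notMem hx, Set.indicator_of_notMem hx]; ring
    rw [this, integrable_indicator_iff hSmeas]
    exact ContinuousOn.integrableOn_compact (isCompact_closedBall _ _)
      (Continuous.continuousOn (by continuity))
  -- pointwise comparison
  have hpt : ∀ x : E3, 0 ≤ (‖x‖^2 - R^2) * (g x - f₀ x) := by
    intro x
    by_cases hx : x ∈ S
    · have h1 : ‖x‖ ≤ R := by rwa [hSdef, mem_closedBall, dist_zero_right] at hx
      have h2 : ‖x‖^2 ≤ R^2 := pow_le_pow_left₀ (norm_nonneg x) h1 2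
      have h3 : g x ≤ f₀ x := by
        rw [hf₀def, Set.indicator_of_mem hx]; exact hf_bound _
      have := mul_nonneg (neg_nonneg.2 (sub_nonpos.2 h2)) (neg_nonneg.2 (sub_nonpos.2 h3))
      rwa [neg_mul_neg] at this
    · have h1 : R < ‖x‖ := by
        rw [hSdef, mem_closedBall, dist_zero_right, not_le] at hx; exact hx
      have h2 : R^2 ≤ ‖x‖^2 := pow_le_pow_left₀ hR.le h1.le 2
      have h3 : f₀ x = 0 := by rw [hf₀def, Set.indicator_of_notMem hx]
      have h4 : 0 ≤ g x := hf_nonneg (e x)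
      rw [h3, sub_zero]
      exact mul_nonneg (sub_nonneg.2 h2) h4
  have hexp : (fun x : E3 => (‖x‖^2 - R^2) * (g x - f₀ x))
      = fun x => (‖x‖^2 * g x - ‖x‖^2 * f₀ x) - (R^2 * g x - R^2 * f₀ x) := by
    funext x; ring
  have hint : 0 ≤ ∫ x : E3, (‖x‖^2 - R^2) * (g x - f₀ x) :=
    integral_nonneg hpt
  rw [hexp] at hint
  have i1 : Integrable (fun x : E3 => ‖x‖^2 * g x - ‖x‖^2 * f₀ x) := hE_int.sub hI₂_int
  have i2 : Integrable (fun x : E3 => R^2 * g x - R^2 * f₀ x) :=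
    (hg_int.const_mul _).sub (hf₀_int.const_mul _)
  rw [integral_sub i1 i2, integral_sub hE_int hI₂_int,
    integral_sub (hg_int.const_mul (R^2)) (hf₀_int.const_mul (R^2)),
    integral_const_mul, integral_const_mul, hE_val, hI₂, hg_mass, hf₀_mass] at hint
  -- key inequality
  have key : 4*π/5 * R^5 / θ₀ ≤ 2 * ρ * e₀ := by linarith
  clear_value R
  clear hint hexp i1 i2 hpt hI₂_int hI₂ hf₀_mass hf₀_int hSmeas hf₀def f₀ hSdef S
  clear hE_val hE_int hEfun hE_int_pi hg_mass hg_int hg_def g mp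
  clear henergy hmom hmass hf_bound hf_nonneg hf_int f hRdef hbase
  -- cube it
  have key3 : 243 * (ρ * θ₀)^2 ≤ 16000 * π^2 * e₀^3 := by
    have h2 : (R^5)^3 = (3 * ρ * θ₀ / (4 * π))^5 := by
      rw [show (R^5)^3 = (R^3)^5 by ring, hR3]
    have hA : (4*π/5 * R^5 / θ₀)^3 = 243 * ρ^5 * θ₀^2 / (2000 * π^2) := by
      rw [show (4*π/5 * R^5 / θ₀)^3 = (4*π/5)^3 * (R^5)^3 / θ₀^3 by ring, h2]
      field_simp
      ring
    have h1 : 243 * ρ^5 * θ₀^2 / (2000 * π^2) ≤ (2 * ρ * e₀)^3 := by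
      rw [← hA]; exact pow_le_pow_left₀ (by positivity) key 3
    rw [div_le_iff₀ (by positivity)] at h1
    nlinarith [pow_pos hρ 3]
  -- final algebra
  have hL : 0 ≤ θ₀ * ρ * (3 / (4 * π * e₀)) ^ ((3 : ℝ) / 2) := by positivity
  have hRt : 0 ≤ (5 / 3) * Real.sqrt (10 / π) := by positivity
  rw [← pow_le_pow_iff_left₀ hL hRt (two_ne_zero)]
  have hb : (0:ℝ) ≤ 3 / (4 * π * e₀) := by positivity
  have hrp : ((3 / (4 * π * e₀)) ^ ((3:ℝ)/2))^2 = (3 / (4 * π * e₀))^3 := by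
    rw [← Real.rpow_natCast ((3 / (4 * π * e₀)) ^ ((3:ℝ)/2)) 2, ← Real.rpow_mul hb]
    norm_num
  rw [mul_pow, mul_pow, hrp]
  calc θ₀^2 * ρ^2 * (3 / (4 * π * e₀))^3
      = (θ₀ * ρ)^2 * 27 / (4 * π * e₀)^3 := by rw [div_pow]; ring
    _ ≤ 250 / (9 * π) := by
        rw [div_le_div_iff₀ (by positivity) (by positivity)]
        nlinarith [mul_le_mul_of_nonneg_left key3 hπ.le]
    _ = (5 / 3 * Real.sqrt (10 / π))^2 := by
        rw [mul_pow, Real.sq_sqrt (by positivity : (0:ℝ) ≤ 10/π)]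
        ring
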